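/- Let u : ℝ → ℝ be continuous, bounded and square-integrable, and let X ∈ ℝ be a point where u attains its global maximum, with u(X) > 0. Suppose the principal-value limit L := (1/π)·lim_{ε→0⁺} ∫_{|y|>ε} ( u(X) − u(X−y) ) / y² dy exists. Then L ≥ (16/(9π)) · u(X)³ / ‖u‖²_{L²(ℝ)}. -/

import Mathlib

open MeasureTheory Filter Set

lemma int2_Ioi {c : ℝ} (hc : 0 < c) : IntegrableOn (fun y : ℝ => (y ^ 2)⁻¹) (Ioi c) := by
  refine (integrableOn_Ioi_rpow_of_lt (show (-2:ℝ) < -1 by norm_num) hc).congr_fun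
    (fun x hx => ?_) measurableSet_Ioi
  have hx0 : (0:ℝ) < x := hc.trans hx
  beta_reduce
  rw [show (-2:ℝ) = -((2:ℕ):ℝ) by norm_num, Real.rpow_neg hx0.le, Real.rpow_natCast]

lemma val2_Ioi {c : ℝ} (hc : 0 < c) : ∫ y in Ioi c, (y ^ 2)⁻¹ = 1 / c := by
  have : ∫ y in Ioi c, (y ^ 2)⁻¹ = ∫ y in Ioi c, y ^ (-2:ℝ) := by
    refine setIntegral_congr_fun measurableSet_Ioi (fun x hx => ?_)
    have hx0 : (0:ℝ) < x := hc.trans hx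
    rw [show (-2:ℝ) = -((2:ℕ):ℝ) by norm_num, Real.rpow_neg hx0.le, Real.rpow_natCast]
  rw [this, integral_Ioi_rpow_of_lt (by norm_num) hc]
  rw [show (-2:ℝ) + 1 = -1 by norm_num, Real.rpow_neg_one]
  field_simp

lemma int4_Ioi {c : ℝ} (hc : 0 < c) : IntegrableOn (fun y : ℝ => (y ^ 4)⁻¹) (Ioi c) := by
  refine (integrableOn_Ioi_rpow_of_lt (show (-4:ℝ) < -1 by norm_num) hc).congr_fun
    (fun x hx => ?_) measurableSet_Ioi
  have hx0 : (0:ℝ) < x := hc.trans hx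
  beta_reduce
  rw [show (-4:ℝ) = -((4:ℕ):ℝ) by norm_num, Real.rpow_neg hx0.le, Real.rpow_natCast]

lemma val4_Ioi {c : ℝ} (hc : 0 < c) : ∫ y in Ioi c, (y ^ 4)⁻¹ = 1 / (3 * c ^ 3) := by
  have : ∫ y in Ioi c, (y ^ 4)⁻¹ = ∫ y in Ioi c, y ^ (-4:ℝ) := by
    refine setIntegral_congr_fun measurableSet_Ioi (fun x hx => ?_)
    have hx0 : (0:ℝ) < x := hc.trans hx
    rw [show (-4:ℝ) = -((4:ℕ):ℝ) by norm_num, Real.rpow_neg hx0.le, Real.rpow_natCast]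
  rw [this, integral_Ioi_rpow_of_lt (by norm_num) hc]
  rw [show (-4:ℝ) + 1 = -((3:ℕ):ℝ) by norm_num, Real.rpow_neg hc.le, Real.rpow_natCast]
  have h3 : c ^ 3 ≠ 0 := by positivity
  field_simp
  ring

lemma S_eq (c : ℝ) : {y : ℝ | c < |y|} = Iio (-c) ∪ Ioi c := by
  ext y
  simp only [mem_setOf_eq, mem_union, mem_Iio, mem_Ioi, lt_abs]
  constructor
  · rintro (h | h); · exact Or.inr h
    · exact Or.inl (by linarith)
  · rintro (h | h); · exact Or.inr (by linarith)
    · exact Or.inl h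

lemma even_intOn {f : ℝ → ℝ} (hf : ∀ x, f (-x) = f x) {c : ℝ} (h : IntegrableOn f (Ioi c)) :
    IntegrableOn f (Iio (-c)) := by
  have m : MeasurableEmbedding (fun x : ℝ => -x) := (Homeomorph.neg ℝ).measurableEmbedding
  rw [IntegrableOn, ← Measure.map_neg_eq_self (volume : Measure ℝ)]
  rw [← IntegrableOn, m.integrableOn_map_iff]
  simp_rw [Function.comp_def, hf, neg_preimage, neg_Iio, neg_neg]
  exact h

lemma even_integral {f : ℝ → ℝ} (hf : ∀ x, f (-x) = f x) (c : ℝ) :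
    ∫ y in Iio (-c), f y = ∫ y in Ioi c, f y := by
  have h := integral_comp_neg_Iic (-c) f
  simp_rw [hf, neg_neg] at h
  rw [← integral_Iic_eq_integral_Iio, h]

lemma even_setIntegral {f : ℝ → ℝ} (hf : ∀ x, f (-x) = f x) {c : ℝ} (hc : 0 < c)
    (h : IntegrableOn f (Ioi c)) :
    IntegrableOn f {y : ℝ | c < |y|} ∧
      ∫ y in {y : ℝ | c < |y|}, f y = 2 * ∫ y in Ioi c, f y := by
  have h1 : IntegrableOn f (Iio (-c)) := even_intOn hf h
  have hd : Disjoint (Iio (-c)) (Ioi c) :=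
    (Iic_disjoint_Ioi (by linarith : -c ≤ c)).mono_left Iio_subset_Iic_self
  constructor
  · rw [S_eq]; exact h1.union h
  · rw [S_eq, setIntegral_union hd measurableSet_Ioi h1 h, even_integral hf c]; ring

lemma am_gm_aux {t A C : ℝ} (ht : 0 < t) : A * C ≤ t / 2 * A ^ 2 + 1 / (2 * t) * C ^ 2 := by
  have h1 : t / 2 * A ^ 2 + 1 / (2 * t) * C ^ 2 - A * C = (t * A - C) ^ 2 / (2 * t) := by
    field_simp; ring
  nlinarith [div_nonneg (sq_nonneg (t * A - C)) (by positivity : (0:ℝ) ≤ 2 * t)]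

lemma arith_key {A J : ℝ} (hA : A ≠ 0) (hJ : J ≠ 0) :
    A * (2 * (1 / (3 * J / (8 * A ^ 2)))) -
      (32 * A ^ 3 / (9 * J ^ 2) / 2 * J +
        1 / (2 * (32 * A ^ 3 / (9 * J ^ 2))) * (2 * (1 / (3 * (3 * J / (8 * A ^ 2)) ^ 3))))
      = 16 / 9 * A ^ 3 / J := by
  field_simp
  ring


/-- The truncated principal-value integral for the fractional Laplacian on `ℝ`. -/
noncomputable def pvIntegral (u : ℝ → ℝ) (x ε : ℝ) : ℝ :=
  (1 / Real.pi) * ∫ y in {y : ℝ | ε < |y|}, (u x - u (x - y)) / y ^ 2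

/-- `Λu(x) = L` in the principal-value sense. -/
def HasPVLambda (u : ℝ → ℝ) (x L : ℝ) : Prop :=
  Tendsto (fun ε => pvIntegral u x ε) (nhdsWithin 0 (Set.Ioi 0)) (nhds L)

set_option maxHeartbeats 1000000 in
/-- the Córdoba–Córdoba-type inequality at a global maximum `X` of a
continuous, bounded, square-integrable function `u` with `u(X) > 0`:
`Λu(X) ≥ (16/(9π))·u(X)³/‖u‖²_{L²}`. -/
theorem cubic_lower_bound_at_maximum_real
    (u : ℝ → ℝ) (X L : ℝ)
    (hc : Continuous u)
    (hb : ∃ M : ℝ, ∀ x : ℝ, |u x| ≤ M)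
    (hL2 : Integrable (fun x => u x ^ 2))
    (hmax : ∀ x : ℝ, u x ≤ u X)
    (hpos : 0 < u X)
    (hpv : HasPVLambda u X L) :
    16 / (9 * Real.pi) * u X ^ 3 / (∫ x : ℝ, u x ^ 2) ≤ L := by
  obtain ⟨M, hM⟩ := hb
  set I := ∫ x : ℝ, u x ^ 2 with hIdef
  clear_value I
  -- positivity of I
  have hI : 0 < I := by
    rw [hIdef, integral_pos_iff_support_of_nonneg (fun x => sq_nonneg _) hL2]
    have hopen : IsOpen {x : ℝ | u x ≠ 0} := isOpen_compl_singleton.preimage hc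
    have hsub : {x : ℝ | u x ≠ 0} ⊆ Function.support (fun x => u x ^ 2) :=
      fun x hx => pow_ne_zero 2 hx
    exact lt_of_lt_of_le (hopen.measure_pos volume ⟨X, ne_of_gt hpos⟩) (measure_mono hsub)
  obtain ⟨R, hRdef⟩ : ∃ R : ℝ, R = 3 * I / (8 * u X ^ 2) := ⟨_, rfl⟩
  obtain ⟨t, htdef⟩ : ∃ t : ℝ, t = 32 * u X ^ 3 / (9 * I ^ 2) := ⟨_, rfl⟩
  have hRpos : 0 < R := by rw [hRdef]; positivity
  have ht : 0 < t := by rw [htdef]; positivity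
  -- integrability of the integrand on annuli
  have hbdd : ∀ y : ℝ, ‖u X - u (X - y)‖ ≤ |u X| + M := fun y => by
    rw [Real.norm_eq_abs]
    exact (abs_sub _ _).trans (add_le_add le_rfl (hM _))
  have hginto : ∀ c : ℝ, 0 < c →
      IntegrableOn (fun y => (u X - u (X - y)) / y ^ 2) {y : ℝ | c < |y|} := by
    intro c hcpos
    have h2c := (even_setIntegral (fun x => by simp) hcpos (int2_Ioi hcpos)).1
    have hmeas : AEStronglyMeasurable (fun y : ℝ => u X - u (X - y))
        (volume.restrict {y : ℝ | c < |y|}) :=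
      (continuous_const.sub (hc.comp (continuous_const.sub continuous_id))).aestronglyMeasurable
    simp_rw [div_eq_mul_inv]
    exact Integrable.bdd_mul (c := |u X| + M) h2c hmeas (ae_of_all _ hbdd)
  -- pieces at radius R
  have h2R := even_setIntegral (f := fun y : ℝ => (y ^ 2)⁻¹) (fun x => by simp) hRpos
    (int2_Ioi hRpos)
  have h4R := even_setIntegral (f := fun y : ℝ => (y ^ 4)⁻¹)
    (fun x => by have h4 : ((-x:ℝ)) ^ 4 = x ^ 4 := by ring
                 simp only [h4]) hRpos (int4_Ioi hRpos)
  obtain ⟨h2int, h2val⟩ := h2R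
  obtain ⟨h4int, h4val⟩ := h4R
  have v2 : ∫ y in {y : ℝ | R < |y|}, (y ^ 2)⁻¹ = 2 * (1 / R) := by
    rw [h2val, val2_Ioi hRpos]
  have v4 : ∫ y in {y : ℝ | R < |y|}, (y ^ 4)⁻¹ = 2 * (1 / (3 * R ^ 3)) := by
    rw [h4val, val4_Ioi hRpos]
  have hcomp : Integrable (fun y : ℝ => u (X - y) ^ 2) := hL2.comp_sub_left X
  have hIcomp : ∫ y : ℝ, u (X - y) ^ 2 = I := by
    rw [hIdef]; exact integral_sub_left_eq_self (fun x => u x ^ 2) volume X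
  have hsqint : IntegrableOn (fun y : ℝ => u (X - y) ^ 2) {y : ℝ | R < |y|} :=
    hcomp.integrableOn
  have hsetI : ∫ y in {y : ℝ | R < |y|}, u (X - y) ^ 2 ≤ I :=
    le_of_le_of_eq (setIntegral_le_integral hcomp (ae_of_all _ fun y => sq_nonneg _)) hIcomp
  have hmulint : IntegrableOn (fun y : ℝ => u (X - y) * (y ^ 2)⁻¹) {y : ℝ | R < |y|} :=
    Integrable.bdd_mul (c := M) h2int
      ((hc.comp (continuous_const.sub continuous_id)).aestronglyMeasurable)
      (ae_of_all _ fun y => by simpa [Real.norm_eq_abs] using hM (X - y))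
  -- pointwise AM-GM
  have hAM : ∀ y : ℝ, u (X - y) * (y ^ 2)⁻¹ ≤ t / 2 * u (X - y) ^ 2 + 1 / (2 * t) * (y ^ 4)⁻¹ := by
    intro y
    have hy : ((y ^ 2)⁻¹ : ℝ) ^ 2 = (y ^ 4)⁻¹ := by
      rw [← inv_pow, ← inv_pow, ← pow_mul]
    have h := am_gm_aux (A := u (X - y)) (C := (y ^ 2)⁻¹) ht
    rwa [hy] at h
  have hCS : ∫ y in {y : ℝ | R < |y|}, u (X - y) * (y ^ 2)⁻¹
      ≤ t / 2 * I + 1 / (2 * t) * (2 * (1 / (3 * R ^ 3))) := by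
    have hadd : IntegrableOn (fun y : ℝ => t / 2 * u (X - y) ^ 2 + 1 / (2 * t) * (y ^ 4)⁻¹)
        {y : ℝ | R < |y|} := (hsqint.const_mul (t / 2)).add (h4int.const_mul (1 / (2 * t)))
    calc ∫ y in {y : ℝ | R < |y|}, u (X - y) * (y ^ 2)⁻¹
        ≤ ∫ y in {y : ℝ | R < |y|}, (t / 2 * u (X - y) ^ 2 + 1 / (2 * t) * (y ^ 4)⁻¹) :=
          setIntegral_mono hmulint hadd hAM
      _ = t / 2 * (∫ y in {y : ℝ | R < |y|}, u (X - y) ^ 2)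
            + 1 / (2 * t) * ∫ y in {y : ℝ | R < |y|}, (y ^ 4)⁻¹ := by
          rw [integral_add (hsqint.const_mul (t / 2)) (h4int.const_mul (1 / (2 * t))), integral_const_mul,
            integral_const_mul]
      _ ≤ t / 2 * I + 1 / (2 * t) * (2 * (1 / (3 * R ^ 3))) := by
          rw [v4]
          have := mul_le_mul_of_nonneg_left hsetI (by positivity : (0:ℝ) ≤ t / 2)
          linarith
  have hsplit : ∫ y in {y : ℝ | R < |y|}, (u X - u (X - y)) / y ^ 2
      = u X * (2 * (1 / R)) - ∫ y in {y : ℝ | R < |y|}, u (X - y) * (y ^ 2)⁻¹ := by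
    have e : ∀ y : ℝ, (u X - u (X - y)) / y ^ 2
        = u X * (y ^ 2)⁻¹ - u (X - y) * (y ^ 2)⁻¹ := by
      intro y; rw [sub_div, div_eq_mul_inv, div_eq_mul_inv]
    simp_rw [e]
    rw [integral_sub (h2int.const_mul (u X)) hmulint, integral_const_mul, v2]
  have harith : u X * (2 * (1 / R)) - (t / 2 * I + 1 / (2 * t) * (2 * (1 / (3 * R ^ 3))))
      = 16 / 9 * u X ^ 3 / I := by
    rw [hRdef, htdef]
    exact arith_key (ne_of_gt hpos) (ne_of_gt hI)
  have hkey : 16 / 9 * u X ^ 3 / I ≤ ∫ y in {y : ℝ | R < |y|}, (u X - u (X - y)) / y ^ 2 := by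
    rw [hsplit, ← harith]; linarith
  -- pass to the limit
  have hπ : (0:ℝ) < Real.pi := Real.pi_pos
  refine ge_of_tendsto hpv ?_
  filter_upwards [Ioo_mem_nhdsGT hRpos] with ε hε
  have hmono : ∫ y in {y : ℝ | R < |y|}, (u X - u (X - y)) / y ^ 2
      ≤ ∫ y in {y : ℝ | ε < |y|}, (u X - u (X - y)) / y ^ 2 := by
    refine setIntegral_mono_set (hginto ε hε.1)
      (ae_of_all _ fun y => div_nonneg (sub_nonneg.2 (hmax _)) (sq_nonneg _))
      (HasSubset.Subset.eventuallyLE fun y hy => ?_)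
    exact lt_trans hε.2 hy
  have heq : 16 / (9 * Real.pi) * u X ^ 3 / I = 1 / Real.pi * (16 / 9 * u X ^ 3 / I) := by
    field_simp
  rw [heq]
  unfold pvIntegral
  exact mul_le_mul_of_nonneg_left (le_trans hkey hmono) (by positivity)
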